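/- Let G be a finite nilpotent group and suppose |G| = m_1 · m_2 · ⋯ · m_k, where k ≥ 3 and each m_i is an integer greater than 1. Then there exist subsets A_1, …, A_k of G that form a complete factorization of G with |A_i| = m_i for all i = 1, …, k. -/

import Mathlib

open Subgroup

universe u

section Helpers


lemma ccf_sum_le_prod {ι : Type*} (s : Finset ι) (f : ι → ℕ) (hf : ∀ i ∈ s, 2 ≤ f i) :
    ∑ i ∈ s, f i ≤ ∏ i ∈ s, f i := by
  classical
  induction s using Finset.induction_on with
  | empty => simp
  | @insert a s hnotmem ih =>

    rw [Finset.sum_insert hnotmem, Finset.prod_insert hnotmem]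
    rcases s.eq_empty_or_nonempty with rfl | hne
    · simp
    · obtain ⟨b, hb⟩ := hne
      have h2 : 2 ≤ f a := hf a (Finset.mem_insert_self a s)
      have hrest : ∀ i ∈ s, 2 ≤ f i := fun i hi => hf i (Finset.mem_insert_of_mem hi)
      have hsum := ih hrest
      have hprod2 : 2 ≤ ∏ i ∈ s, f i :=
        le_trans (hrest b hb) (Finset.single_le_prod' (fun i hi => Nat.one_le_of_lt (hrest i hi)) hb)
      nlinarith [hsum, hprod2, h2]

lemma ccf_ncard_biUnion_le {α : Type*} [Finite α] {ι : Type*} (s : Finset ι) (f : ι → Set α) :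
    (⋃ j ∈ s, f j).ncard ≤ ∑ j ∈ s, (f j).ncard := by
  classical
  induction s using Finset.induction_on with
  | empty => simp
  | @insert a s hnotmem ih =>

    rw [Finset.sum_insert hnotmem]
    have : (⋃ j ∈ insert a s, f j) = f a ∪ ⋃ j ∈ s, f j := by
      simp [Set.biUnion_insert]
    rw [this]
    exact le_trans (Set.ncard_union_le _ _) (by omega)



/-- In a nilpotent group, a nontrivial normal subgroup meets the center nontrivially. -/
lemma ccf_exists_center_inter {G : Type*} [Group G] [Group.IsNilpotent G]
    (N : Subgroup G) (hN : N.Normal) (hbot : N ≠ ⊥) :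
    ∃ x : G, x ∈ N ∧ x ∈ Subgroup.center G ∧ x ≠ 1 := by
  obtain ⟨n, hn⟩ := Group.IsNilpotent.nilpotent (G := G)
  have key : ∀ i : ℕ, N ⊓ Subgroup.upperCentralSeries G i ≠ ⊥ →
      ∃ x : G, x ∈ N ∧ x ∈ Subgroup.center G ∧ x ≠ 1 := by
    intro i
    induction i with
    | zero => simp [Subgroup.upperCentralSeries_zero]
    | succ i ih =>
      intro hi
      by_cases h : N ⊓ Subgroup.upperCentralSeries G i = ⊥
      · obtain ⟨⟨x, hx⟩, hx1⟩ := Subgroup.ne_bot_iff_exists_ne_one.mp hi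
        have hxN : x ∈ N := hx.1
        have hxZ : x ∈ Subgroup.upperCentralSeries G (i+1) := hx.2
        have hxne : x ≠ 1 := by simpa [Subtype.ext_iff] using hx1
        refine ⟨x, hxN, ?_, hxne⟩
        rw [Subgroup.mem_center_iff]
        intro y
        have hc : x * y * x⁻¹ * y⁻¹ ∈ N ⊓ Subgroup.upperCentralSeries G i := by
          constructor
          · have : y * x⁻¹ * y⁻¹ ∈ N := hN.conj_mem _ (N.inv_mem hxN) y
            show x * y * x⁻¹ * y⁻¹ ∈ N
            have := N.mul_mem hxN this
            convert this using 1; group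
          · exact (Subgroup.mem_upperCentralSeries_succ_iff).mp hxZ y
        rw [h, Subgroup.mem_bot] at hc
        have : x * y = y * x := by
          have := hc
          have h2 : x * y * x⁻¹ * y⁻¹ * (y * x) = y * x := by rw [this]; group
          calc x * y = x * y * x⁻¹ * y⁻¹ * (y * x) := by group
          _ = y * x := h2
        exact this.symm
      · exact ih h
  apply key n
  rwa [hn, inf_top_eq]

/-- A finite nilpotent group whose order is divisible by a prime `p` has a central element
of order `p`. -/
lemma ccf_exists_central_prime {G : Type*} [Group G] [Finite G] [Group.IsNilpotent G]
    {p : ℕ} (hp : p.Prime) (hdvd : p ∣ Nat.card G) :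
    ∃ x : G, x ∈ Subgroup.center G ∧ orderOf x = p := by
  haveI : Fact p.Prime := ⟨hp⟩
  obtain ⟨P⟩ : Nonempty (Sylow p G) := inferInstance
  have hPnormal : (P : Subgroup G).Normal := by
    have h04 := (isNilpotent_of_finite_tfae (G := G)).out 0 3
    exact h04.mp inferInstance p ⟨hp⟩ P
  have hcardP : Nat.card P = p ^ (Nat.card G).factorization p := P.card_eq_multiplicity
  have hPne : (P : Subgroup G) ≠ ⊥ := by
    rw [← Subgroup.one_lt_card_iff_ne_bot, hcardP]
    have : 1 ≤ (Nat.card G).factorization p :=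
      (Nat.Prime.factorization_pos_of_dvd hp Nat.card_pos.ne' hdvd)
    calc 1 < p := hp.one_lt
    _ = p ^ 1 := (pow_one p).symm
    _ ≤ p ^ (Nat.card G).factorization p := Nat.pow_le_pow_right hp.pos this
  obtain ⟨x, hxP, hxc, hxne⟩ := ccf_exists_center_inter (P : Subgroup G) hPnormal hPne
  -- orderOf x is a power of p
  obtain ⟨r, hr⟩ : ∃ r : ℕ, orderOf x = p ^ r := by
    have : orderOf x ∣ p ^ (Nat.card G).factorization p := by
      rw [← hcardP]
      exact Subgroup.orderOf_dvd_natCard _ hxP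
    exact (Nat.dvd_prime_pow hp).mp this |>.imp fun r hr => hr.2
  have hrpos : r ≠ 0 := by
    rintro rfl
    rw [pow_zero, orderOf_eq_one_iff] at hr
    exact hxne hr
  refine ⟨x ^ p ^ (r - 1), Subgroup.pow_mem _ hxc _, ?_⟩
  apply orderOf_eq_prime
  · have hexp : p ^ (r - 1) * p = p ^ r := by
      rw [← pow_succ]; congr 1; omega
    rw [← pow_mul, hexp, ← hr]
    exact pow_orderOf_eq_one x
  · apply pow_ne_one_of_lt_orderOf
    · exact (pow_pos hp.pos _).ne' -- p^(r-1) ≠ 0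
    · rw [hr]
      exact Nat.pow_lt_pow_right hp.one_lt (by omega)


/-- A finite nilpotent group has a normal subgroup of every order dividing the group order. -/
lemma ccf_exists_normal_of_dvd (d : ℕ) :
    ∀ {G : Type u} [Group G] [Finite G] [Group.IsNilpotent G], d ∣ Nat.card G →
      ∃ N : Subgroup G, N.Normal ∧ Nat.card N = d := by
  induction d using Nat.strong_induction_on with
  | _ d ih =>
    intro G _ _ _ hd
    rcases eq_or_ne d 1 with rfl | hd1
    · exact ⟨⊥, inferInstance, by simp⟩
    have hd0 : d ≠ 0 := by
      rintro rfl
      exact Nat.card_pos.ne' (Nat.eq_zero_of_zero_dvd hd)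
    set p := d.minFac with hpdef
    have hp : p.Prime := Nat.minFac_prime hd1
    have hpd : p ∣ d := Nat.minFac_dvd d
    obtain ⟨x, hxc, hxo⟩ := ccf_exists_central_prime (G := G) hp (hpd.trans hd)
    set Z := Subgroup.zpowers x with hZdef
    have hZnormal : Z.Normal := by
      constructor
      intro n hn g
      have : n ∈ Subgroup.center G := by
        rcases Subgroup.mem_zpowers_iff.mp hn with ⟨m, rfl⟩
        exact Subgroup.zpow_mem _ hxc m
      rw [Subgroup.mem_center_iff] at this
      have : g * n * g⁻¹ = n := by rw [this g]; group
      rwa [this]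
    have hZcard : Nat.card Z = p := by rw [Nat.card_zpowers, hxo]
    haveI := hZnormal
    have hcardQ : Nat.card (G ⧸ Z) * p = Nat.card G := by
      rw [← hZcard]; exact (Subgroup.card_eq_card_quotient_mul_card_subgroup Z).symm
    have hdvdQ : d / p ∣ Nat.card (G ⧸ Z) := by
      obtain ⟨c, hc⟩ := hd
      refine ⟨c, ?_⟩
      have : (d / p) * p = d := Nat.div_mul_cancel hpd
      have h2 : Nat.card (G ⧸ Z) * p = (d / p) * p * c := by
        rw [this, hcardQ, hc]
      have hppos : 0 < p := hp.pos
      nlinarith [h2]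
    obtain ⟨Nbar, hNbarnormal, hNbarcard⟩ :=
      ih (d / p) (Nat.div_lt_self (Nat.pos_of_ne_zero hd0) hp.one_lt) hdvdQ
    haveI := hNbarnormal
    refine ⟨Subgroup.comap (QuotientGroup.mk' Z) Nbar, Subgroup.normal_comap _, ?_⟩
    have hpre : ((Subgroup.comap (QuotientGroup.mk' Z) Nbar : Subgroup G) : Set G)
        = QuotientGroup.mk ⁻¹' (Nbar : Set (G ⧸ Z)) := rfl
    have := Nat.card_congr (QuotientGroup.preimageMkEquivSubgroupProdSet Z (Nbar : Set (G ⧸ Z)))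
    have hcard2 : Nat.card (QuotientGroup.mk ⁻¹' (Nbar : Set (G ⧸ Z))) = Nat.card Z * Nat.card Nbar := by
      rw [this, Nat.card_prod]; rfl
    have : Nat.card (Subgroup.comap (QuotientGroup.mk' Z) Nbar) =
        Nat.card (QuotientGroup.mk ⁻¹' (Nbar : Set (G ⧸ Z)) : Set G) := by
      rfl
    rw [this, hcard2, hZcard, hNbarcard, Nat.mul_div_cancel' hpd]

/-- ... containing a given normal subgroup. -/
lemma ccf_exists_normal_between {G : Type u} [Group G] [Finite G] [Group.IsNilpotent G]
    (M : Subgroup G) [hM : M.Normal] {d : ℕ} (h1 : Nat.card M ∣ d) (h2 : d ∣ Nat.card G) :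
    ∃ N : Subgroup G, N.Normal ∧ M ≤ N ∧ Nat.card N = d := by
  have hQ : d / Nat.card M ∣ Nat.card (G ⧸ M) := by
    have hGQ : Nat.card (G ⧸ M) * Nat.card M = Nat.card G :=
      (Subgroup.card_eq_card_quotient_mul_card_subgroup M).symm
    obtain ⟨c, hc⟩ := h2
    refine ⟨c, ?_⟩
    have hM0 : 0 < Nat.card M := Nat.card_pos
    have : (d / Nat.card M) * Nat.card M = d := Nat.div_mul_cancel h1
    nlinarith [hGQ, this, hc]
  obtain ⟨Nbar, hNn, hNc⟩ := ccf_exists_normal_of_dvd (d / Nat.card M) hQ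
  haveI := hNn
  refine ⟨Subgroup.comap (QuotientGroup.mk' M) Nbar, Subgroup.normal_comap _, ?_, ?_⟩
  · calc M = (QuotientGroup.mk' M).ker := (QuotientGroup.ker_mk' M).symm
    _ ≤ _ := Subgroup.ker_le_comap (f := QuotientGroup.mk' M) Nbar
  · have hcard2 : Nat.card (QuotientGroup.mk ⁻¹' (Nbar : Set (G ⧸ M))) =
        Nat.card M * Nat.card Nbar := by
      rw [Nat.card_congr (QuotientGroup.preimageMkEquivSubgroupProdSet M (Nbar : Set (G ⧸ M))),
        Nat.card_prod]; rfl
    have : Nat.card (Subgroup.comap (QuotientGroup.mk' M) Nbar) =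
        Nat.card (QuotientGroup.mk ⁻¹' (Nbar : Set (G ⧸ M)) : Set G) := rfl
    rw [this, hcard2, hNc, Nat.mul_div_cancel' h1]


lemma ccf_exists_chain {G : Type u} [Group G] [Finite G] [Group.IsNilpotent G] (k : ℕ)
    (D : ℕ → ℕ) (hdvd : ∀ j, D (j+1) ∣ D j) (htop : ∀ j, k ≤ j → D j = 1)
    (hD0 : D 0 = Nat.card G) :
    ∃ N : ℕ → Subgroup G, (∀ j, (N j).Normal) ∧ (∀ j, N (j+1) ≤ N j) ∧
      (∀ j, Nat.card (N j) = D j) := by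
  have hDmono : ∀ a b : ℕ, a ≤ b → D b ∣ D a := by
    intro a b hab
    induction b with
    | zero => simp_all
    | succ b ih =>
      rcases Nat.lt_or_ge a (b+1) with h | h
      · exact (hdvd b).trans (ih (by omega))
      · have : a = b + 1 := by omega
        subst this; exact dvd_rfl
  have key : ∀ t : ℕ, ∃ N : ℕ → Subgroup G, (∀ j, (N j).Normal) ∧ (∀ j, N (j+1) ≤ N j) ∧
      (∀ j, Nat.card (N j) = D (max j (k - t))) := by
    intro t
    induction t with
    | zero =>
      refine ⟨fun _ => ⊥, fun _ => inferInstance, fun _ => le_rfl, fun j => ?_⟩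
      rw [Nat.sub_zero, htop (max j k) (le_max_right _ _)]
      simp
    | succ t ih =>
      obtain ⟨N, hnorm, hdesc, hcard⟩ := ih
      rcases Nat.eq_zero_or_pos (k - t) with h0 | hpos
      · have : k - (t+1) = k - t := by omega
        rw [this]
        exact ⟨N, hnorm, hdesc, hcard⟩
      · set a := k - (t+1) with ha
        have hat : k - t = a + 1 := by omega
        haveI := hnorm (a+1)
        obtain ⟨K, hKnorm, hKle, hKcard⟩ := ccf_exists_normal_between (N (a+1))
          (d := D a) (by
            rw [hcard (a+1), hat, max_self]
            exact hdvd a)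
          (by rw [← hD0]; exact hDmono 0 a (Nat.zero_le a))
        refine ⟨fun j => if j ≤ a then K else N j, fun j => ?_, fun j => ?_, fun j => ?_⟩
        · dsimp only; split <;> [exact hKnorm; exact hnorm j]
        · dsimp only
          rcases Nat.lt_or_ge j a with h | h
          · rw [if_pos (by omega : j + 1 ≤ a), if_pos (by omega : j ≤ a)]
          · rcases Nat.eq_or_lt_of_le h with rfl | h2
            · rw [if_neg (by omega), if_pos le_rfl]
              exact hKle
            · rw [if_neg (by omega), if_neg (by omega)]
              exact hdesc j
        · dsimp only
          rcases le_or_gt j a with h | h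
          · rw [if_pos h, hKcard, max_eq_right h]
          · rw [if_neg (by omega), hcard j, hat]
            congr 1
            omega
  obtain ⟨N, h1, h2, h3⟩ := key k
  refine ⟨N, h1, h2, fun j => ?_⟩
  rw [h3 j]
  congr 1
  omega


variable {G : Type*} [Group G]

/-- `T` is a left transversal of `H` inside `K`. -/
def CCFTrans (H K : Subgroup G) (T : Set G) : Prop :=
  T ⊆ (K : Set G) ∧ ∀ x ∈ K, ∃! t, t ∈ T ∧ t⁻¹ * x ∈ H

lemma ccf_trans_exists (H K : Subgroup G) (B : Set G)
    (havoid : ∀ x ∈ K, ∃ y, y ∈ K ∧ y⁻¹ * x ∈ H ∧ y ∉ B) :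
    ∃ T : Set G, CCFTrans H K T ∧ ∀ t ∈ T, t ∉ B := by
  classical
  set F : G ⧸ H → G := fun c =>
    if h : ∃ y, y ∈ K ∧ y ∉ B ∧ QuotientGroup.mk y = c then h.choose else 1 with hF
  have hFspec : ∀ x : G, x ∈ K → F (QuotientGroup.mk x) ∈ K ∧ F (QuotientGroup.mk x) ∉ B ∧
      (QuotientGroup.mk (F (QuotientGroup.mk x)) : G ⧸ H) = QuotientGroup.mk x := by
    intro x hx
    obtain ⟨y, hyK, hyH, hyB⟩ := havoid x hx
    have hex : ∃ y, y ∈ K ∧ y ∉ B ∧ (QuotientGroup.mk y : G ⧸ H) = QuotientGroup.mk x :=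
      ⟨y, hyK, hyB, (QuotientGroup.eq).mpr hyH⟩
    rw [hF]
    dsimp only
    rw [dif_pos hex]
    exact hex.choose_spec
  refine ⟨F '' (QuotientGroup.mk '' (K : Set G)), ⟨?_, ?_⟩, ?_⟩
  · rintro t ⟨c, ⟨x, hx, rfl⟩, rfl⟩
    exact (hFspec x hx).1
  · intro x hx
    refine ⟨F (QuotientGroup.mk x), ⟨Set.mem_image_of_mem F (Set.mem_image_of_mem _ hx), ?_⟩, ?_⟩
    · exact (QuotientGroup.eq).mp (hFspec x hx).2.2
    · rintro t' ⟨⟨c, ⟨x', hx', rfl⟩, rfl⟩, ht'⟩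
      have h1 : (QuotientGroup.mk (F (QuotientGroup.mk x')) : G ⧸ H) = QuotientGroup.mk x' :=
        (hFspec x' hx').2.2
      have h2 : (QuotientGroup.mk (F (QuotientGroup.mk x')) : G ⧸ H) = QuotientGroup.mk x :=
        (QuotientGroup.eq).mpr ht'
      rw [← h2.symm.trans h1]
  · rintro t ⟨c, ⟨x, hx, rfl⟩, rfl⟩
    exact (hFspec x hx).2.1
 
lemma ccf_trans_card {H K : Subgroup G} {T : Set G} (hHK : H ≤ K) (hT : CCFTrans H K T) :
    T.ncard * Nat.card H = Nat.card K := by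
  have hbij : Function.Bijective (fun p : T × H => (⟨p.1.1 * p.2.1,
      K.mul_mem (hT.1 p.1.2) (hHK p.2.2)⟩ : K)) := by
    constructor
    · rintro ⟨⟨t, ht⟩, ⟨h, hh⟩⟩ ⟨⟨t', ht'⟩, ⟨h', hh'⟩⟩ heq
      simp only [Subtype.mk.injEq] at heq
      have htt' : t'⁻¹ * t ∈ H := by
        have h2 : t'⁻¹ * (t * h) * h⁻¹ = t'⁻¹ * (t' * h') * h⁻¹ := by rw [heq]
        have h3 : t'⁻¹ * t = h' * h⁻¹ := by
          calc t'⁻¹ * t = t'⁻¹ * (t * h) * h⁻¹ := by group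
          _ = t'⁻¹ * (t' * h') * h⁻¹ := h2
          _ = h' * h⁻¹ := by group
        rw [h3]; exact H.mul_mem hh' (H.inv_mem hh)
      have : t = t' := by
        obtain ⟨u, _, huniq⟩ := hT.2 t (hT.1 ht)
        have e1 : t = u := huniq t ⟨ht, by rw [inv_mul_cancel]; exact H.one_mem⟩
        have e2 : t' = u := huniq t' ⟨ht', htt'⟩
        rw [e1, e2]
      subst this
      have : h = h' := by
        have := heq
        exact mul_left_cancel heq
      simp [this]
    · rintro ⟨x, hx⟩
      obtain ⟨t, ⟨htT, htH⟩, _⟩ := hT.2 x hx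
      refine ⟨⟨⟨t, htT⟩, ⟨t⁻¹ * x, htH⟩⟩, ?_⟩
      simp
  have := Nat.card_congr (Equiv.ofBijective _ hbij)
  rw [Nat.card_prod] at this
  rw [← Nat.card_coe_set_eq, this]


variable {G : Type*} [Group G]

lemma ccf_chain_le {N : ℕ → Subgroup G} (hdesc : ∀ i, N (i+1) ≤ N i) :
    ∀ a b : ℕ, b ≤ a → N a ≤ N b := by
  intro a
  induction a with
  | zero => intro b hb; rw [Nat.le_zero.mp hb]
  | succ a ih =>
    intro b hb
    rcases Nat.lt_or_ge b (a+1) with h | h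
    · exact (hdesc a).trans (ih b (by omega))
    · have : b = a + 1 := by omega
      subst this; exact le_rfl

lemma ccf_ofFn_prod {k : ℕ} (u : ℕ → G) :
    (List.ofFn (fun i : Fin k => u i.val)).prod = ((List.range k).map u).prod := by
  rw [List.ofFn_eq_map, ← List.map_coe_finRange_eq_range, List.map_map]
  rfl

lemma ccf_inj (k : ℕ) : ∀ (N : ℕ → Subgroup G), (∀ i, (N i).Normal) → (∀ i, N (i+1) ≤ N i) →
    ∀ (e t s : ℕ → G), (∀ i < k, t i ∈ N i) → (∀ i < k, s i ∈ N i) →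
    (∀ i < k, (t i)⁻¹ * s i ∈ N (i+1) → t i = s i) →
    ((List.range k).map (fun i => e i * t i)).prod
      = ((List.range k).map (fun i => e i * s i)).prod →
    ∀ i < k, t i = s i := by
  induction k with
  | zero => intro _ _ _ _ _ _ _ _ _ _ i hi; omega
  | succ k ih =>
    intro N hnorm hdesc e t s ht hs huniq hprod i hik
    rw [List.range_succ_eq_map, List.map_cons, List.prod_cons, List.map_cons, List.prod_cons,
      List.map_map, List.map_map] at hprod
    haveI := hnorm 1
    have happ := congrArg (QuotientGroup.mk' (N 1)) hprod
    simp only [map_mul, map_list_prod, List.map_map] at happ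
    have hconst : ∀ (w : ℕ → G), (∀ i < k, w (i+1) ∈ N (i+1)) →
        (List.range k).map (⇑(QuotientGroup.mk' (N 1)) ∘ (fun i => e i * w i) ∘ Nat.succ)
          = (List.range k).map (fun i => (QuotientGroup.mk' (N 1)) (e (i+1))) := by
      intro w hw
      apply List.map_congr_left
      intro j hj
      rw [List.mem_range] at hj
      have hwj : w (j+1) ∈ N 1 := ccf_chain_le hdesc (j+1) 1 (by omega) (hw j hj)
      simp only [Function.comp_apply, map_mul]
      rw [show (QuotientGroup.mk' (N 1)) (w j.succ) = 1 from (QuotientGroup.eq_one_iff _).mpr hwj,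
        mul_one]
    rw [hconst t (fun i hi => ht (i+1) (by omega)), hconst s (fun i hi => hs (i+1) (by omega))]
      at happ
    have hts0 : t 0 = s 0 := by
      have h1 := mul_right_cancel happ
      have h2 := mul_left_cancel h1
      have h3 : (QuotientGroup.mk (t 0) : G ⧸ N 1) = QuotientGroup.mk (s 0) := h2
      exact huniq 0 (by omega) ((QuotientGroup.eq).mp h3)
    have htail : ((List.range k).map (fun i => (e ∘ Nat.succ) i * (t ∘ Nat.succ) i)).prod
        = ((List.range k).map (fun i => (e ∘ Nat.succ) i * (s ∘ Nat.succ) i)).prod := by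
      rw [hts0] at hprod
      exact mul_left_cancel hprod
    have := ih (N ∘ Nat.succ) (fun i => hnorm (i+1)) (fun i => hdesc (i+1))
      (e ∘ Nat.succ) (t ∘ Nat.succ) (s ∘ Nat.succ)
      (fun i hi => ht (i+1) (by omega)) (fun i hi => hs (i+1) (by omega))
      (fun i hi => huniq (i+1) (by omega)) htail
    rcases Nat.eq_zero_or_pos i with rfl | hpos
    · exact hts0
    · obtain ⟨j, rfl⟩ : ∃ j, i = j + 1 := ⟨i - 1, by omega⟩
      exact this j (by omega)

lemma ccf_surj (k : ℕ) : ∀ (N : ℕ → Subgroup G), (∀ i, (N i).Normal) →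
    ∀ (T : ℕ → Set G), (∀ i < k, ∀ x ∈ N i, ∃ t, t ∈ T i ∧ t⁻¹ * x ∈ N (i+1)) →
    ∀ (e : ℕ → G) (g : G), (((List.range k).map e).prod)⁻¹ * g ∈ N 0 →
    ∃ t : ℕ → G, (∀ i < k, t i ∈ T i) ∧
      ∃ n, n ∈ N k ∧ ((List.range k).map (fun i => e i * t i)).prod * n = g := by
  induction k with
  | zero =>
    intro N _ T _ e g hg
    refine ⟨fun _ => 1, by omega, g, ?_, by simp⟩
    simpa using hg
  | succ k ih =>
    intro N hnorm T hT e g hg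
    set E' : G := ((List.range k).map (e ∘ Nat.succ)).prod with hE'
    have hgE : (e 0 * E')⁻¹ * g ∈ N 0 := by
      rw [List.range_succ_eq_map, List.map_cons, List.prod_cons, List.map_map] at hg
      exact hg
    have hx : (e 0)⁻¹ * g * E'⁻¹ ∈ N 0 := by
      have h1 := (hnorm 0).conj_mem _ hgE E'
      have h2 : E' * ((e 0 * E')⁻¹ * g) * E'⁻¹ = (e 0)⁻¹ * g * E'⁻¹ := by group
      rwa [h2] at h1
    obtain ⟨t0, ht0T, ht0H⟩ := hT 0 (by omega) _ hx
    have hg' : (((List.range k).map (e ∘ Nat.succ)).prod)⁻¹ * ((e 0 * t0)⁻¹ * g) ∈ N 1 := by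
      have h1 := (hnorm 1).conj_mem _ ht0H E'⁻¹
      have h2 : E'⁻¹ * (t0⁻¹ * ((e 0)⁻¹ * g * E'⁻¹)) * E'⁻¹⁻¹
          = E'⁻¹ * ((e 0 * t0)⁻¹ * g) := by group
      rwa [h2] at h1
    obtain ⟨t', ht'T, n, hn, hprod'⟩ := ih (N ∘ Nat.succ) (fun i => hnorm (i+1))
      (T ∘ Nat.succ) (fun i hi => hT (i+1) (by omega)) (e ∘ Nat.succ) ((e 0 * t0)⁻¹ * g) hg'
    classical
    refine ⟨fun i => if i = 0 then t0 else t' (i-1), ?_, n, hn, ?_⟩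
    · intro i hi
      rcases Nat.eq_zero_or_pos i with rfl | hpos
      · simpa using ht0T
      · obtain ⟨j, rfl⟩ : ∃ j, i = j + 1 := ⟨i - 1, by omega⟩
        simpa using ht'T j (by omega)
    · rw [List.range_succ_eq_map, List.map_cons, List.prod_cons, List.map_map]
      have hmapeq : (List.range k).map ((fun i => e i * if i = 0 then t0 else t' (i-1)) ∘ Nat.succ)
          = (List.range k).map (fun i => (e ∘ Nat.succ) i * t' i) := by
        apply List.map_congr_left
        intro j _
        simp [Function.comp]
      rw [hmapeq]
      rw [show ((fun i => if i = 0 then t0 else t' (i - 1)) 0) = t0 from by simp]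
      rw [mul_assoc, hprod']
      group

end Helpers

/-- Subsets `A 0, …, A (k-1)` of a group `G` form a complete factorization of `G` if they are
pairwise disjoint and every element `g ∈ G` is uniquely represented as
`g = a_0 * a_1 * ⋯ * a_(k-1)` with `a_i ∈ A i` for each `i`. -/
def IsCompleteFactorization {G : Type*} [Group G] {k : ℕ} (A : Fin k → Set G) : Prop :=
  (∀ i j : Fin k, i ≠ j → Disjoint (A i) (A j)) ∧
  ∀ g : G, ∃! f : Fin k → G, (∀ i, f i ∈ A i) ∧ (List.ofFn f).prod = g

/-- Let `G` be a finite nilpotent group and suppose `|G| = m_1 ⋯ m_k` where `k ≥ 3` and each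
`m_i > 1`. Then there exist subsets `A_1, …, A_k` of `G` forming a complete factorization of `G`
with `|A_i| = m_i` for all `i`. -/


theorem complete_factorization_of_nilpotent {G : Type*} [Group G] [Finite G]
    [Group.IsNilpotent G] {k : ℕ} (hk : 3 ≤ k) (m : Fin k → ℕ) (hm : ∀ i, 1 < m i)
    (hcard : Nat.card G = ∏ i, m i) :
    ∃ A : Fin k → Set G, IsCompleteFactorization A ∧ ∀ i, (A i).ncard = m i := by
  classical
  -- extended exponent function and partial products
  set m' : ℕ → ℕ := fun j => if h : j < k then m ⟨j, h⟩ else 1 with hm'def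
  have hm'2 : ∀ j < k, 2 ≤ m' j := fun j hj => by
    simp only [hm'def, dif_pos hj]; exact hm ⟨j, hj⟩
  have hm'pos : ∀ j, 1 ≤ m' j := fun j => by
    by_cases h : j < k
    · exact le_trans (by norm_num) (hm'2 j h)
    · simp [hm'def, h]
  set D : ℕ → ℕ := fun j => ∏ i ∈ Finset.Ico j k, m' i with hDdef
  have hDsucc : ∀ j < k, D j = m' j * D (j+1) := fun j hj => by
    simp only [hDdef]
    exact Finset.prod_eq_prod_Ico_succ_bot hj m'
  have hDtop : ∀ j, k ≤ j → D j = 1 := fun j hj => by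
    simp only [hDdef]
    rw [Finset.Ico_eq_empty (by omega), Finset.prod_empty]
  have hDdvd : ∀ j, D (j+1) ∣ D j := by
    intro j
    rcases Nat.lt_or_ge j k with h | h
    · rw [hDsucc j h]; exact Dvd.intro_left _ rfl
    · rw [hDtop j h, hDtop (j+1) (by omega)]
  have hD0 : D 0 = Nat.card G := by
    rw [hcard]
    simp only [hDdef]
    rw [← Finset.range_eq_Ico, ← Fin.prod_univ_eq_prod_range]
    apply Finset.prod_congr rfl
    intro i _
    simp [hm'def, i.isLt]
  have hDpos : ∀ j, 1 ≤ D j := fun j => Nat.one_le_iff_ne_zero.mpr (Finset.prod_pos (fun i _ => hm'pos i)).ne'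
  -- the chain
  obtain ⟨N, hnorm, hdesc, hcardN⟩ := ccf_exists_chain k D hDdvd hDtop hD0
  have hNtop : N 0 = ⊤ := Subgroup.eq_top_of_card_eq _ (by rw [hcardN 0, hD0])
  have hNbot : N k = ⊥ := Subgroup.card_eq_one.mp (by rw [hcardN k, hDtop k le_rfl])
  -- the translating elements
  have he : ∀ j : ℕ, ∃ x : G, 1 ≤ j → j < k → (x ∈ N (j-1) ∧ x ∉ N j) := by
    intro j
    by_cases h : 1 ≤ j ∧ j < k
    · have hle : N j ≤ N (j-1) := by
        have := hdesc (j-1)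
        rwa [show j - 1 + 1 = j by omega] at this
      have hlt : N j < N (j-1) := by
        refine lt_of_le_of_ne hle (fun heq => ?_)
        have h1 : Nat.card (N (j-1)) = m' (j-1) * D j := by
          rw [hcardN (j-1), hDsucc (j-1) (by omega), show j - 1 + 1 = j by omega]
        have h2 : Nat.card (N j) = D j := hcardN j
        rw [heq] at h2
        have h3 : m' (j-1) * D j = D j := h1.symm.trans h2
        have h4 := hm'2 (j-1) (by omega)
        have h5 := hDpos j
        nlinarith
      obtain ⟨x, hx1, hx2⟩ := SetLike.exists_of_lt hlt
      exact ⟨x, fun _ _ => ⟨hx1, hx2⟩⟩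
    · exact ⟨1, fun h1 h2 => absurd ⟨h1, h2⟩ h⟩
  set e : ℕ → G := fun j => if h : 1 ≤ j ∧ j < k then (he j).choose else 1 with hedef
  have he0 : e 0 = 1 := by simp [hedef]
  have heprop : ∀ j, 1 ≤ j → j < k → e j ∈ N (j-1) ∧ e j ∉ N j := by
    intro j h1 h2
    simp only [hedef, dif_pos (And.intro h1 h2)]
    exact (he j).choose_spec h1 h2
  -- transversals for levels ≥ 1
  have hTex : ∀ j : ℕ, ∃ T : Set G, 1 ≤ j → j < k → CCFTrans (N (j+1)) (N j) T := by
    intro j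
    by_cases h : 1 ≤ j ∧ j < k
    · obtain ⟨T, hT, -⟩ := ccf_trans_exists (N (j+1)) (N j) (∅ : Set G)
        (fun x hx => ⟨x, hx, by simp [Subgroup.one_mem], by simp⟩)
      exact ⟨T, fun _ _ => hT⟩
    · exact ⟨∅, fun h1 h2 => absurd ⟨h1, h2⟩ h⟩
  set T : ℕ → Set G := fun j => (hTex j).choose with hTdef
  have hTprop : ∀ j, 1 ≤ j → j < k → CCFTrans (N (j+1)) (N j) (T j) :=
    fun j h1 h2 => (hTex j).choose_spec h1 h2
  -- the translated sets at levels ≥ 1, and the bad set B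
  set Aset : ℕ → Set G := fun j => (fun y => e j * y) '' T j with hAsetdef
  set B : Set G := ⋃ j ∈ Finset.Ico 1 k, Aset j with hBdef
  -- facts about Aset
  have hAsub : ∀ j, 1 ≤ j → j < k → Aset j ⊆ (fun y => e j * y) '' (N j : Set G) := by
    intro j h1 h2
    exact Set.image_mono (hTprop j h1 h2).1
  have hAsubN : ∀ j, 2 ≤ j → j < k → Aset j ⊆ (N 1 : Set G) := by
    intro j h2 hk' y hy
    obtain ⟨t, ht, rfl⟩ := hy
    have h1 : e j ∈ N 1 := ccf_chain_le hdesc (j-1) 1 (by omega) (heprop j (by omega) hk').1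
    have h2' : t ∈ N 1 := ccf_chain_le hdesc j 1 (by omega) ((hTprop j (by omega) hk').1 ht)
    exact (N 1).mul_mem h1 h2'
  have hAnotN : ∀ j, 1 ≤ j → j < k → ∀ y ∈ Aset j, y ∉ N j := by
    intro j h1 h2 y hy hyN
    obtain ⟨t, ht, rfl⟩ := hy
    have htN : t ∈ N j := (hTprop j h1 h2).1 ht
    exact (heprop j h1 h2).2 (by
      have := (N j).mul_mem hyN ((N j).inv_mem htN)
      rwa [mul_assoc, mul_inv_cancel, mul_one] at this)
  -- cardinalities of transversals
  have hTcard : ∀ j, 1 ≤ j → j < k → (T j).ncard = m' j := by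
    intro j h1 h2
    have hle : N (j+1) ≤ N j := hdesc j
    have := ccf_trans_card hle (hTprop j h1 h2)
    rw [hcardN j, hcardN (j+1), hDsucc j h2] at this
    exact Nat.eq_of_mul_eq_mul_right (hDpos (j+1)) this
  have hAcard : ∀ j, 1 ≤ j → j < k → (Aset j).ncard = m' j := by
    intro j h1 h2
    have hre : Aset j = (fun y => e j * y) '' T j := rfl
    rw [hre, Set.ncard_image_of_injective _ (mul_right_injective (e j))]
    exact hTcard j h1 h2
  -- the special transversal at level 0
  have havoid : ∀ x ∈ N 0, ∃ y, y ∈ N 0 ∧ y⁻¹ * x ∈ N 1 ∧ y ∉ B := by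
    intro x hx
    set C : Set G := (fun y => x * y) '' (N 1 : Set G) with hCdef
    have hCcard : C.ncard = D 1 := by
      have hre : C = (fun y => x * y) '' (N 1 : Set G) := rfl
      rw [hre, Set.ncard_image_of_injective _ (mul_right_injective x), ← hcardN 1,
        ← Nat.card_coe_set_eq]
      rfl
    have hCmem : ∀ y, y ∈ C ↔ x⁻¹ * y ∈ N 1 := by
      intro y
      constructor
      · rintro ⟨n, hn, rfl⟩
        show x⁻¹ * (x * n) ∈ N 1
        rwa [← mul_assoc, inv_mul_cancel, one_mul]
      · intro h
        exact ⟨x⁻¹ * y, h, by show x * (x⁻¹ * y) = y; rw [← mul_assoc, mul_inv_cancel, one_mul]⟩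
    have hD2ge : 2 ≤ D 2 := by
      have h2k : 2 < k := by omega
      have : m' 2 ≤ D 2 := by
        simp only [hDdef]
        exact Finset.single_le_prod' (fun i _ => hm'pos i) (Finset.mem_Ico.mpr ⟨le_rfl, h2k⟩)
      have := hm'2 2 h2k
      omega
    have hkey : (C ∩ B).ncard < C.ncard := by
      by_cases hcase : (e 1)⁻¹ * x ∈ N 1
      · -- C is the coset of e 1; only Aset 1 can meet it
        have hsub : C ∩ B ⊆ Aset 1 := by
          rintro y ⟨hyC, hyB⟩
          rw [hBdef] at hyB
          simp only [Set.mem_iUnion] at hyB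
          obtain ⟨j, hj, hyA⟩ := hyB
          rw [Finset.mem_Ico] at hj
          rcases Nat.lt_or_ge j 2 with hj2 | hj2
          · have : j = 1 := by omega
            subst this; exact hyA
          · exfalso
            have hyN1 : y ∈ (N 1 : Set G) := hAsubN j hj2 hj.2 hyA
            have hxy : x⁻¹ * y ∈ N 1 := (hCmem y).mp hyC
            have hxN1 : x ∈ N 1 := by
              have := (N 1).mul_mem hyN1 ((N 1).inv_mem hxy)
              rwa [show y * (x⁻¹ * y)⁻¹ = y * y⁻¹ * x from by group, mul_inv_cancel, one_mul]
                at this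
            have he1 : e 1 ∈ N 1 := by
              have := (N 1).mul_mem hxN1 ((N 1).inv_mem hcase)
              rwa [show x * ((e 1)⁻¹ * x)⁻¹ = x * x⁻¹ * e 1 from by group, mul_inv_cancel,
                one_mul] at this
            exact (heprop 1 le_rfl (by omega)).2 he1
        calc (C ∩ B).ncard ≤ (Aset 1).ncard := Set.ncard_le_ncard hsub (Set.toFinite _)
        _ = m' 1 := hAcard 1 le_rfl (by omega)
        _ < m' 1 * D 2 := by nlinarith [hm'2 1 (by omega), hD2ge]
        _ = D 1 := (hDsucc 1 (by omega)).symm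
        _ = C.ncard := hCcard.symm
      · -- C avoids Aset 1
        have hsub : C ∩ B ⊆ ⋃ j ∈ Finset.Ico 2 k, Aset j := by
          rintro y ⟨hyC, hyB⟩
          rw [hBdef] at hyB
          simp only [Set.mem_iUnion] at hyB
          obtain ⟨j, hj, hyA⟩ := hyB
          rw [Finset.mem_Ico] at hj
          rcases Nat.lt_or_ge j 2 with hj2 | hj2
          · exfalso
            have : j = 1 := by omega
            subst this
            obtain ⟨t, ht, rfl⟩ := hyA
            have htN : t ∈ N 1 := (hTprop 1 le_rfl (by omega)).1 ht
            have hxy : x⁻¹ * (e 1 * t) ∈ N 1 := (hCmem _).mp hyC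
            apply hcase
            have h5 := (N 1).mul_mem hxy ((N 1).inv_mem htN)
            rw [show x⁻¹ * (e 1 * t) * t⁻¹ = x⁻¹ * e 1 from by group] at h5
            have h7 := (N 1).inv_mem h5
            rwa [show (x⁻¹ * e 1)⁻¹ = (e 1)⁻¹ * x from by group] at h7
          · exact Set.mem_biUnion (Finset.mem_Ico.mpr ⟨hj2, hj.2⟩) hyA
        have hDgt : D 2 < D 1 := by
          have h1 := hDsucc 1 (by omega)
          have h2 := hm'2 1 (by omega)
          have h3 := hDpos 2
          nlinarith
        calc (C ∩ B).ncard ≤ (⋃ j ∈ Finset.Ico 2 k, Aset j).ncard :=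
              Set.ncard_le_ncard hsub (Set.toFinite _)
        _ ≤ ∑ j ∈ Finset.Ico 2 k, (Aset j).ncard := ccf_ncard_biUnion_le _ _
        _ = ∑ j ∈ Finset.Ico 2 k, m' j := Finset.sum_congr rfl (fun j hj => by
              rw [Finset.mem_Ico] at hj
              exact hAcard j (by omega) hj.2)
        _ ≤ ∏ j ∈ Finset.Ico 2 k, m' j := ccf_sum_le_prod _ _ (fun j hj => by
              rw [Finset.mem_Ico] at hj
              exact hm'2 j hj.2)
        _ = D 2 := rfl
        _ < D 1 := hDgt
        _ = C.ncard := hCcard.symm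
    obtain ⟨y, hyC, hyB⟩ := Set.exists_mem_notMem_of_ncard_lt_ncard hkey (Set.toFinite _)
    refine ⟨y, by rw [hNtop]; trivial, ?_, fun hyB' => hyB ⟨hyC, hyB'⟩⟩
    have hxy := (hCmem y).mp hyC
    have := (N 1).inv_mem hxy
    rwa [show (x⁻¹ * y)⁻¹ = y⁻¹ * x from by group] at this
  -- choose the level-0 transversal avoiding B
  obtain ⟨T0, hT0trans, hT0B⟩ := ccf_trans_exists (N 1) (N 0) B havoid
  set Tfull : ℕ → Set G := fun j => if j = 0 then T0 else T j with hTfulldef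
  have hTfull0 : Tfull 0 = T0 := if_pos rfl
  have hTfullpos : ∀ j : ℕ, 1 ≤ j → Tfull j = T j := fun j hj => if_neg (by omega)
  have hTfull : ∀ j, j < k → CCFTrans (N (j+1)) (N j) (Tfull j) := by
    intro j hj
    rcases Nat.eq_zero_or_pos j with rfl | hpos
    · rw [hTfull0]; exact hT0trans
    · rw [hTfullpos j hpos]
      exact hTprop j hpos hj
  have hTfullcard : ∀ j, j < k → (Tfull j).ncard = m' j := by
    intro j hj
    have := ccf_trans_card (hdesc j) (hTfull j hj)
    rw [hcardN j, hcardN (j+1), hDsucc j hj] at this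
    exact Nat.eq_of_mul_eq_mul_right (hDpos (j+1)) this
  have hTfullA : ∀ j, 1 ≤ j → (fun y => e j * y) '' Tfull j = Aset j := by
    intro j hj
    rw [hTfullpos j hj]
  set A : Fin k → Set G := fun i => (fun y => e i.val * y) '' Tfull i.val with hAdef
  refine ⟨A, ⟨?_, ?_⟩, ?_⟩
  · -- pairwise disjoint
    have hdisj : ∀ a b : Fin k, a.val < b.val → ∀ y, y ∈ A a → y ∈ A b → False := by
      intro a b hab y hya hyb
      have hbk : b.val < k := b.isLt
      have hb1 : 1 ≤ b.val := by omega
      have hybA : y ∈ Aset b.val := by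
        have hba : A b = Aset b.val := by
          show (fun y => e b.val * y) '' Tfull b.val = Aset b.val
          exact hTfullA b.val hb1
        rwa [hba] at hyb
      rcases Nat.eq_zero_or_pos a.val with ha0 | hapos
      · -- a = 0 : y avoids B but lies in B
        have hA0 : A a = (fun y => e 0 * y) '' T0 := by
          show (fun y => e a.val * y) '' Tfull a.val = _
          rw [ha0, hTfull0]
        rw [hA0] at hya
        obtain ⟨τ, hτ, hτy⟩ := hya
        have hτy' : τ = y := by
          have h9 : e 0 * τ = y := hτy
          rw [he0, one_mul] at h9
          exact h9
        refine hT0B τ hτ ?_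
        rw [hτy']
        exact Set.mem_biUnion (Finset.mem_Ico.mpr ⟨hb1, hbk⟩) hybA
      · -- 1 ≤ a < b
        have hyaA : y ∈ Aset a.val := by
          have haa : A a = Aset a.val := by
            show (fun y => e a.val * y) '' Tfull a.val = Aset a.val
            exact hTfullA a.val hapos
          rwa [haa] at hya
        have hynotN : y ∉ N a.val := hAnotN a.val hapos a.isLt y hyaA
        apply hynotN
        obtain ⟨t, ht, rfl⟩ := hybA
        have h1 : e b.val ∈ N a.val :=
          ccf_chain_le hdesc (b.val - 1) a.val (by omega) (heprop b.val hb1 hbk).1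
        have h2 : t ∈ N a.val :=
          ccf_chain_le hdesc b.val a.val (by omega) ((hTprop b.val hb1 hbk).1 ht)
        exact (N a.val).mul_mem h1 h2
    intro i j hne
    refine Set.disjoint_left.mpr fun {y} hyi hyj => ?_
    rcases lt_or_gt_of_ne (show i.val ≠ j.val from fun h => hne (Fin.ext h)) with h | h
    · exact hdisj i j h y hyi hyj
    · exact hdisj j i h y hyj hyi
  · -- unique factorization
    intro g
    obtain ⟨t, htT, n, hn, hprod⟩ := ccf_surj k N hnorm Tfull
      (fun i hi x hx => by
        obtain ⟨u, hu, -⟩ := (hTfull i hi).2 x hx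
        exact ⟨u, hu⟩)
      e g (by rw [hNtop]; trivial)
    rw [hNbot, Subgroup.mem_bot] at hn
    subst hn
    rw [mul_one] at hprod
    have htN : ∀ j, j < k → t j ∈ N j := fun j hj => (hTfull j hj).1 (htT j hj)
    refine ⟨fun i => e i.val * t i.val, ⟨?_, ?_⟩, ?_⟩
    · intro i
      exact Set.mem_image_of_mem _ (htT i.val i.isLt)
    · exact (ccf_ofFn_prod (fun j => e j * t j)).trans hprod
    · -- uniqueness
      rintro f' ⟨hmem', hprod'⟩
      set t' : ℕ → G := fun j => if h : j < k then (e j)⁻¹ * f' ⟨j, h⟩ else 1 with ht'def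
      have ht'T : ∀ j, j < k → t' j ∈ Tfull j := by
        intro j hj
        obtain ⟨τ, hτ, hτeq⟩ := hmem' ⟨j, hj⟩
        have hτeq' : e j * τ = f' ⟨j, hj⟩ := hτeq
        have : t' j = τ := by
          rw [ht'def]
          simp only [dif_pos hj]
          rw [← hτeq', ← mul_assoc, inv_mul_cancel, one_mul]
        rwa [this]
      have ht'N : ∀ j, j < k → t' j ∈ N j := fun j hj => (hTfull j hj).1 (ht'T j hj)
      have hp1 : ((List.range k).map (fun j => e j * t' j)).prod = g := by
        have hofn : List.ofFn f' = List.ofFn (fun i : Fin k => (fun j => e j * t' j) i.val) := by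
          apply congrArg
          funext i
          simp only [ht'def, dif_pos i.isLt]
          rw [← mul_assoc, mul_inv_cancel, one_mul]
        rw [hofn] at hprod'
        exact (ccf_ofFn_prod (fun j => e j * t' j)).symm.trans hprod'
      have heq : ∀ j, j < k → t' j = t j := by
        apply ccf_inj k N hnorm hdesc e t' t ht'N htN
        · intro j hj hcond
          obtain ⟨u, -, huni⟩ := (hTfull j hj).2 (t j) (htN j hj)
          have e1 : t' j = u := huni (t' j) ⟨ht'T j hj, hcond⟩
          have e2 : t j = u := huni (t j) ⟨htT j hj, by
            rw [inv_mul_cancel]; exact (N (j+1)).one_mem⟩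
          rw [e1, e2]
        · rw [hp1, hprod]
      funext i
      have h1 : f' i = e i.val * t' i.val := by
        rw [ht'def]
        simp only [dif_pos i.isLt]
        rw [← mul_assoc, mul_inv_cancel, one_mul]
      rw [h1, heq i.val i.isLt]
  · -- cardinalities
    intro i
    rw [hAdef]
    simp only
    rw [Set.ncard_image_of_injective _ (mul_right_injective (e i.val)), hTfullcard i.val i.isLt]
    simp [hm'def, i.isLt]
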